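/- For any β ∈ (0, 2π), the set of k ∈ ℕ with cos(kβ) > 0 is infinite, and the set of k ∈ ℕ with cos(kβ) < 0 is infinite. -/

import Mathlib

open Filter Finset Real

lemma auxA (β : ℝ) : ¬ Filter.Tendsto (fun k : ℕ => Real.cos (k * β)) atTop (nhds 0) := by
  intro h
  have h2 : Tendsto (fun k : ℕ => Real.cos ((2 * k : ℕ) * β)) atTop (nhds 0) :=
    h.comp (tendsto_atTop_atTop.2 (fun n => ⟨n, fun m hm => le_trans hm (by omega)⟩))
  have h3 : Tendsto (fun k : ℕ => 2 * Real.cos (k * β) ^ 2 - 1) atTop (nhds (2 * 0 ^ 2 - 1)) :=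
    ((h.pow 2).const_mul 2).sub tendsto_const_nhds
  have heq : (fun k : ℕ => Real.cos ((2 * k : ℕ) * β)) =
      (fun k : ℕ => 2 * Real.cos (k * β) ^ 2 - 1) := by
    funext k
    push_cast
    rw [show ((2:ℝ) * k * β) = 2 * (k * β) by ring, Real.cos_two_mul]
  rw [heq] at h2
  have := tendsto_nhds_unique h2 h3
  norm_num at this

lemma auxB (β : ℝ) (hβ : β ∈ Set.Ioo (0 : ℝ) (2 * Real.pi)) :
    ∃ C : ℝ, ∀ n : ℕ, |∑ k ∈ Finset.range n, Real.cos (k * β)| ≤ C := by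
  obtain ⟨hb0, hb2⟩ := hβ
  set z : ℂ := Complex.exp (β * Complex.I) with hz
  have hz1 : z ≠ 1 := by
    rw [hz, Ne, Complex.exp_eq_one_iff]
    rintro ⟨n, hn⟩
    have h' : (β:ℂ) * Complex.I = ((n:ℂ) * (2*Real.pi)) * Complex.I := by rw [hn]; ring
    have h2 := mul_right_cancel₀ Complex.I_ne_zero h'
    have h3 : β = n * (2*Real.pi) := by exact_mod_cast h2
    have hπ := Real.pi_pos
    have hn0 : (0:ℝ) < n := by nlinarith
    have hn1 : (n:ℝ) < 1 := by nlinarith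
    have : (0:ℤ) < n := by exact_mod_cast hn0
    have : (n:ℤ) < 1 := by exact_mod_cast hn1
    omega
  have habs : ‖z‖ = 1 := Complex.norm_exp_ofReal_mul_I β
  refine ⟨2 / ‖z - 1‖, fun n => ?_⟩
  have hre : ∑ k ∈ Finset.range n, Real.cos (k * β) = (∑ k ∈ Finset.range n, z ^ k).re := by
    rw [Complex.re_sum]
    refine Finset.sum_congr rfl fun k _ => ?_
    rw [hz, ← Complex.exp_nat_mul]
    rw [show (k:ℂ) * ((β:ℂ) * Complex.I) = ((k * β : ℝ) : ℂ) * Complex.I by push_cast; ring]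
    rw [Complex.exp_ofReal_mul_I_re]
  rw [hre]
  refine le_trans (Complex.abs_re_le_norm _) ?_
  rw [geom_sum_eq hz1, norm_div]
  have hnum : ‖z ^ n - 1‖ ≤ 2 := by
    calc ‖z ^ n - 1‖ ≤ ‖z ^ n‖ + ‖(1:ℂ)‖ := by
          exact norm_sub_le _ _
      _ = 2 := by rw [norm_pow, habs]; norm_num
  have hden : 0 < ‖z - 1‖ := norm_pos_iff.mpr (sub_ne_zero.mpr hz1)
  gcongr

-- a sequence with bounded partial sums which is eventually nonneg tends to 0
lemma auxC (u : ℕ → ℝ) (C : ℝ) (N : ℕ)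
    (hC : ∀ n : ℕ, |∑ k ∈ Finset.range n, u k| ≤ C)
    (hN : ∀ k, N ≤ k → 0 ≤ u k) :
    Filter.Tendsto u atTop (nhds 0) := by
  set f : ℕ → ℝ := fun k => max (u k) 0 with hf
  have hf0 : ∀ k, 0 ≤ f k := fun k => le_max_right _ _
  have hfu : ∀ k, N ≤ k → f k = u k := fun k hk => max_eq_left (hN k hk)
  have hsum : ∀ n : ℕ, ∑ k ∈ Finset.range n, f k ≤ (∑ k ∈ Finset.range N, f k) + 2 * C := by
    intro n
    rcases le_or_gt n N with h | h
    · have h1 : ∑ k ∈ Finset.range n, f k ≤ ∑ k ∈ Finset.range N, f k :=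
        Finset.sum_le_sum_of_subset_of_nonneg (Finset.range_subset_range.2 h) (fun k _ _ => hf0 k)
      have : 0 ≤ C := le_trans (abs_nonneg _) (hC 0)
      linarith
    · have hsplit := (Finset.sum_range_add_sum_Ico f h.le).symm
      have heq2 : ∑ k ∈ Finset.Ico N n, f k = ∑ k ∈ Finset.Ico N n, u k :=
        Finset.sum_congr rfl fun k hk => hfu k (Finset.mem_Ico.mp hk).1
      have hsub := Finset.sum_range_add_sum_Ico u h.le
      have h1 := abs_le.mp (hC n)
      have h2 := abs_le.mp (hC N)
      rw [hsplit, heq2]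
      linarith [h1.2, h2.1]
  have hsummable : Summable f :=
    summable_of_sum_range_le hf0 hsum
  have hf_tendsto : Tendsto f atTop (nhds 0) := hsummable.tendsto_atTop_zero
  refine hf_tendsto.congr' ?_
  filter_upwards [eventually_ge_atTop N] with k hk
  exact hfu k hk

theorem stmt17 (β : ℝ) (hβ : β ∈ Set.Ioo (0 : ℝ) (2 * Real.pi)) :
    {k : ℕ | 0 < Real.cos (k * β)}.Infinite ∧
    {k : ℕ | Real.cos (k * β) < 0}.Infinite := by
  obtain ⟨C, hC⟩ := auxB β hβ
  constructor
  · by_contra hinf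
    rw [Set.not_infinite] at hinf
    have hfin := hinf
    obtain ⟨N, hNbd⟩ := hfin.bddAbove
    have hev : ∀ k, N + 1 ≤ k → 0 ≤ -Real.cos (k * β) := by
      intro k hk
      by_contra h
      push_neg at h
      have : k ∈ {k : ℕ | 0 < Real.cos (k * β)} := by simp only [Set.mem_setOf_eq]; linarith
      exact absurd (hNbd this) (by omega)
    have := auxC (fun k => -Real.cos (k * β)) C (N + 1)
      (by intro n; simpa using hC n) hev
    have h0 : Tendsto (fun k : ℕ => Real.cos (k * β)) atTop (nhds 0) := by
      have := this.neg
      simpa using this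
    exact auxA β h0
  · by_contra hinf
    rw [Set.not_infinite] at hinf
    have hfin := hinf
    obtain ⟨N, hNbd⟩ := hfin.bddAbove
    have hev : ∀ k, N + 1 ≤ k → 0 ≤ Real.cos (k * β) := by
      intro k hk
      by_contra h
      push_neg at h
      have : k ∈ {k : ℕ | Real.cos (k * β) < 0} := by simp only [Set.mem_setOf_eq]; linarith
      exact absurd (hNbd this) (by omega)
    exact auxA β (auxC (fun k => Real.cos (k * β)) C (N + 1) hC hev)
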